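/- Let K be a field complete with respect to a nontrivial nonarchimedean absolute value. Let E and F be Fréchet spaces over K and let f : E → F be a continuous K-linear map whose cokernel F/f(E) is a finite-dimensional K-vector space. Then the image f(E) is closed in F, and f is topologically strict, i.e. the induced bijection E/Ker(f) → f(E) (with f(E) carrying the subspace topology) is a homeomorphism. -/

import Mathlib

open Filter Set Topology Function
open scoped Pointwise

section OpenMappingAux

/-- In a topological additive group, the closure of a set is contained in the set plus any
neighbourhood of zero. -/
theorem aux_closure_subset_add {G : Type*} [AddCommGroup G] [TopologicalSpace G]
    [IsTopologicalAddGroup G] {S W : Set G} (hW : W ∈ 𝓝 (0 : G)) : closure S ⊆ S + W := by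
  intro x hx
  have hW' : W ∩ -W ∈ 𝓝 (0 : G) := inter_mem hW (neg_mem_nhds_zero G hW)
  have hx' : {y : G | y + -x ∈ W ∩ -W} ∈ 𝓝 x := by
    rw [← nhds_translation_add_neg x]
    exact preimage_mem_comap hW'
  obtain ⟨s, hs1, hs2⟩ := mem_closure_iff_nhds.1 hx _ hx'
  have h2 : -(s + -x) ∈ W := Set.mem_neg.1 hs1.2
  refine ⟨s, hs2, x - s, ?_, by simp⟩
  rw [show x - s = -(s + -x) by abel]
  exact h2

variable {K : Type*} [NontriviallyNormedField K]

/-- Step A of the open mapping theorem : if `f` is a continuous surjective linear map to a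
Baire topological vector space, then the closure of the image of any neighbourhood of zero is
a neighbourhood of zero. -/
theorem aux_dense_image
    {E : Type*} [AddCommGroup E] [Module K E] [TopologicalSpace E] [IsTopologicalAddGroup E]
    [ContinuousSMul K E]
    {F : Type*} [AddCommGroup F] [Module K F] [TopologicalSpace F] [IsTopologicalAddGroup F]
    [ContinuousSMul K F] [BaireSpace F]
    (f : E →ₗ[K] F) (hf : Continuous f) (hsurj : Function.Surjective f) :
    ∀ U ∈ 𝓝 (0 : E), closure (f '' U) ∈ 𝓝 (0 : F) := by
  intro U hU
  obtain ⟨V, hV, hVU⟩ := exists_nhds_half_neg hU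
  obtain ⟨c, hc⟩ := NormedField.exists_one_lt_norm K
  have hc0 : c ≠ 0 := by
    rintro rfl; simp at hc; linarith
  have hcn : ∀ n : ℕ, (c : K) ^ n ≠ 0 := fun n => pow_ne_zero n hc0
  -- the sets `c ^ n • closure (f '' V)` cover `F`
  have hcov : (⋃ n : ℕ, (c ^ n • closure (f '' V))) = Set.univ := by
    ext y
    simp only [Set.mem_iUnion, Set.mem_univ, iff_true]
    obtain ⟨x, rfl⟩ := hsurj y
    have habs : Absorbs K V {x} := absorbent_nhds_zero (𝕜 := K) hV x
    obtain ⟨r, hr⟩ := absorbs_iff_norm.1 habs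
    obtain ⟨n, hn⟩ := pow_unbounded_of_one_lt r hc
    have hx : x ∈ c ^ n • V := by
      have := hr (c ^ n) (by rw [norm_pow]; exact hn.le)
      exact this rfl
    obtain ⟨v, hv, rfl⟩ := hx
    exact ⟨n, ⟨f v, subset_closure ⟨v, hv, rfl⟩, by rw [map_smul]⟩⟩
  obtain ⟨n, hn⟩ : ∃ n : ℕ, (interior (c ^ n • closure (f '' V))).Nonempty :=
    nonempty_interior_of_iUnion_of_closed
      (fun n => IsClosed.smul_of_ne_zero isClosed_closure (hcn n)) hcov
  have hint : (interior (closure (f '' V))).Nonempty := by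
    rw [interior_smul₀ (hcn n)] at hn
    exact Set.smul_set_nonempty.1 hn
  obtain ⟨y, hy⟩ := hint
  -- translate to get a neighbourhood of zero
  rw [mem_nhds_iff]
  refine ⟨(· + -y) '' interior (closure (f '' V)), ?_, ?_, ?_⟩
  · rintro _ ⟨z, hz, rfl⟩
    have hz' : z ∈ closure (f '' V) := interior_subset hz
    have hy' : y ∈ closure (f '' V) := interior_subset hy
    have : z - y ∈ closure (f '' U) := by
      refine map_mem_closure₂ continuous_sub hz' hy' ?_
      rintro _ ⟨a, ha, rfl⟩ _ ⟨b, hb, rfl⟩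
      exact ⟨a - b, hVU a ha b hb, map_sub f a b⟩
    simpa [sub_eq_add_neg] using this
  · exact (isOpenMap_add_right (-y)) _ isOpen_interior
  · exact ⟨y, hy, by simp⟩

/-- A linear map whose image of every neighbourhood of zero is a neighbourhood of zero is open. -/
theorem aux_isOpenMap_of
    {E : Type*} [AddCommGroup E] [Module K E] [TopologicalSpace E] [IsTopologicalAddGroup E]
    {F : Type*} [AddCommGroup F] [Module K F] [TopologicalSpace F] [IsTopologicalAddGroup F]
    (f : E →ₗ[K] F) (h : ∀ U ∈ 𝓝 (0 : E), f '' U ∈ 𝓝 (0 : F)) : IsOpenMap f := by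
  intro U hU
  rw [isOpen_iff_mem_nhds]
  rintro _ ⟨x, hx, rfl⟩
  have h1 : (· + x) ⁻¹' U ∈ 𝓝 (0 : E) := by
    apply (continuous_add_right x).continuousAt.preimage_mem_nhds
    simpa using hU.mem_nhds hx
  have h2 := h _ h1
  have h3 : (· + f x) '' (f '' ((· + x) ⁻¹' U)) ⊆ f '' U := by
    rintro _ ⟨_, ⟨z, hz, rfl⟩, rfl⟩
    exact ⟨z + x, hz, by rw [map_add]⟩
  refine Filter.mem_of_superset ?_ h3
  have := (isOpenMap_add_right (f x)).image_mem_nhds h2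
  simpa using this

/-- **Open mapping theorem** for complete first-countable topological vector spaces:
a continuous surjective linear map from a complete metrizable TVS onto a complete metrizable
(hence Baire) TVS is open. -/
theorem aux_openMapping
    {E : Type*} [AddCommGroup E] [Module K E] [UniformSpace E] [IsUniformAddGroup E]
    [ContinuousSMul K E] [CompleteSpace E] [FirstCountableTopology E]
    {F : Type*} [AddCommGroup F] [Module K F] [UniformSpace F] [IsUniformAddGroup F]
    [ContinuousSMul K F] [T2Space F] [BaireSpace F]
    (f : E →ₗ[K] F) (hf : Continuous f) (hsurj : Function.Surjective f) :
    IsOpenMap f := by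
  have hA : ∀ U ∈ 𝓝 (0 : E), closure (f '' U) ∈ 𝓝 (0 : F) := aux_dense_image f hf hsurj
  apply aux_isOpenMap_of
  intro U hU
  obtain ⟨b, hb⟩ := (𝓝 (0 : E)).exists_antitone_basis
  have hbmem : ∀ n, b n ∈ 𝓝 (0 : E) := fun n => hb.toHasBasis.mem_of_mem trivial
  -- a choice of "halves"
  have hhalf : ∀ S : Set E, ∃ W : Set E,
      S ∈ 𝓝 (0 : E) → (W ∈ 𝓝 (0 : E) ∧ ∀ v ∈ W, ∀ w ∈ W, v + w ∈ S) := by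
    intro S
    by_cases hS : S ∈ 𝓝 (0 : E)
    · obtain ⟨W, hW1, hW2⟩ := exists_nhds_zero_half hS
      exact ⟨W, fun _ => ⟨hW1, hW2⟩⟩
    · exact ⟨∅, fun h => absurd h hS⟩
  choose half hH using hhalf
  -- the recursively defined shrinking sequence of neighbourhoods
  set V : ℕ → Set E := fun n => Nat.rec (half U ∩ b 0) (fun n p => half p ∩ b (n + 1)) n with hVdef
  have hV0 : V 0 = half U ∩ b 0 := rfl
  have hVs : ∀ n, V (n + 1) = half (V n) ∩ b (n + 1) := fun n => rfl
  have hVmem : ∀ n, V n ∈ 𝓝 (0 : E) := by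
    intro n
    induction n with
    | zero => exact inter_mem (hH U hU).1 (hbmem 0)
    | succ n ih => rw [hVs]; exact inter_mem (hH _ ih).1 (hbmem (n + 1))
  have hVadd : ∀ n, ∀ v ∈ V (n + 1), ∀ w ∈ V (n + 1), v + w ∈ V n := by
    intro n v hv w hw
    rw [hVs] at hv hw
    exact (hH _ (hVmem n)).2 v hv.1 w hw.1
  have hVU : ∀ v ∈ V 0, ∀ w ∈ V 0, v + w ∈ U := by
    intro v hv w hw
    rw [hV0] at hv hw
    exact (hH U hU).2 v hv.1 w hw.1
  have hVb : ∀ n, V n ⊆ b n := by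
    intro n
    cases n with
    | zero => rw [hV0]; exact inter_subset_right
    | succ n => rw [hVs]; exact inter_subset_right
  have hzero : ∀ n, (0 : E) ∈ V n := fun n => mem_of_mem_nhds (hVmem n)
  have hVsub : ∀ n, V (n + 1) ⊆ V n := fun n v hv => by
    simpa using hVadd n v hv 0 (hzero (n + 1))
  -- sums of elements of the `V n` stay controlled
  have hsum : ∀ (x : ℕ → E), (∀ k, x k ∈ V (k + 1)) →
      ∀ p n, (∑ k ∈ Finset.Ico n (n + p + 1), x k) ∈ V n := by
    intro x hx p
    induction p with
    | zero => intro n; simpa using hVsub n (hx n)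
    | succ p ih =>
      intro n
      have h1 : (∑ k ∈ Finset.Ico (n + 1) (n + 1 + p + 1), x k) ∈ V (n + 1) := ih (n + 1)
      have heq : n + (p + 1) + 1 = n + 1 + p + 1 := by omega
      rw [Finset.sum_eq_sum_Ico_succ_bot (by omega) x, heq]
      exact hVadd n (x n) (hx n) _ h1
  -- main claim : the closure of `f '' (V 1)` is contained in `f '' U`
  have main : closure (f '' V 1) ⊆ f '' U := by
    intro y hy
    have step : ∀ (n : ℕ) (z : F), ∃ x : E, z ∈ closure (f '' V (n + 1)) →
        (x ∈ V (n + 1) ∧ z - f x ∈ closure (f '' V (n + 2))) := by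
      intro n z
      by_cases hz : z ∈ closure (f '' V (n + 1))
      · have hN : closure (f '' V (n + 2)) ∈ 𝓝 (0 : F) := hA _ (hVmem (n + 2))
        have hzn : (fun w => z - w) ⁻¹' closure (f '' V (n + 2)) ∈ 𝓝 z := by
          refine (continuous_const.sub continuous_id).continuousAt.preimage_mem_nhds ?_
          simpa using hN
        obtain ⟨t, ht1, ht2⟩ := mem_closure_iff_nhds.1 hz _ hzn
        obtain ⟨x, hx, rfl⟩ := ht2
        exact ⟨x, fun _ => ⟨hx, ht1⟩⟩
      · exact ⟨0, fun h => absurd h hz⟩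
    choose xf hxf using step
    set z : ℕ → F := fun n => Nat.rec y (fun n zn => zn - f (xf n zn)) n with hzdef
    have hz0 : z 0 = y := rfl
    set x : ℕ → E := fun k => xf k (z k) with hxdef
    have hzs' : ∀ n, z (n + 1) = z n - f (x n) := fun n => rfl
    have hinv : ∀ n, z n ∈ closure (f '' V (n + 1)) := by
      intro n
      induction n with
      | zero => exact hy
      | succ n ih => rw [hzs']; exact (hxf n (z n) ih).2
    have hxV : ∀ k, x k ∈ V (k + 1) := fun k => (hxf k (z k) (hinv k)).1
    set s : ℕ → E := fun n => ∑ k ∈ Finset.range n, x k with hsdef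
    have hzseq : ∀ n, z n = y - f (s n) := by
      intro n
      induction n with
      | zero =>
        rw [show s 0 = 0 from rfl, map_zero, sub_zero]
        exact hz0
      | succ n ih =>
        rw [hzs', ih]
        have : s (n + 1) = s n + x n := Finset.sum_range_succ x n
        rw [this, map_add]
        abel
    -- the partial sums form a Cauchy sequence
    have hcauchy : CauchySeq s := by
      rw [cauchySeq_iff]
      intro Vu hVu
      rw [uniformity_eq_comap_nhds_zero E] at hVu
      obtain ⟨t, ht, hsub⟩ := mem_comap.1 hVu
      have ht' : t ∩ -t ∈ 𝓝 (0 : E) := inter_mem ht (neg_mem_nhds_zero E ht)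
      obtain ⟨m, -, hm⟩ := hb.toHasBasis.mem_iff.1 ht'
      refine ⟨m, fun k hk l hl => ?_⟩
      apply hsub
      show s l - s k ∈ t
      have key : ∀ i j, m ≤ i → i ≤ j → s j - s i ∈ t ∩ -t := by
        intro i j hi hij
        rcases eq_or_lt_of_le hij with rfl | hij
        · simpa using mem_of_mem_nhds ht'
        · have : s j - s i = ∑ k ∈ Finset.Ico i j, x k := by
            rw [Finset.sum_Ico_eq_sub x hij.le]
          rw [this]
          obtain ⟨p, rfl⟩ : ∃ p, j = i + p + 1 := ⟨j - i - 1, by omega⟩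
          exact hm (hb.antitone hi (hVb i (hsum x hxV p i)))
      rcases le_total k l with h | h
      · exact ((key k l hk h).1)
      · have := (key l k hl h).2
        have h2 : -(s k - s l) ∈ t := Set.mem_neg.1 this
        simpa using h2
    obtain ⟨xlim, hxlim⟩ := cauchySeq_tendsto_of_complete hcauchy
    have hsV0 : ∀ n, s n ∈ V 0 := by
      intro n
      cases n with
      | zero =>
        rw [show s 0 = 0 from rfl]
        exact hzero 0
      | succ n =>
        show (∑ k ∈ Finset.range (n + 1), x k) ∈ V 0
        rw [Finset.range_eq_Ico]
        have h := hsum x hxV n 0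
        rw [show (0 : ℕ) + n + 1 = n + 1 from by omega] at h
        exact h
    have hxlimV : xlim ∈ closure (V 0) := mem_closure_of_tendsto hxlim (Eventually.of_forall hsV0)
    have hxlimU : xlim ∈ U := by
      obtain ⟨a, ha, w, hw, hsum'⟩ := aux_closure_subset_add (hVmem 0) hxlimV
      rw [← hsum']
      exact hVU a ha w hw
    -- `y = f xlim`
    have hfz : Tendsto (fun n => f (s n)) atTop (𝓝 (f xlim)) :=
      (hf.tendsto xlim).comp hxlim
    have hz0' : Tendsto z atTop (𝓝 (0 : F)) := by
      rw [Filter.tendsto_atTop']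
      intro N hN
      obtain ⟨N', hN'1, hN'2⟩ := exists_nhds_zero_half hN
      have hpre : f ⁻¹' N' ∈ 𝓝 (0 : E) := by
        refine hf.continuousAt.preimage_mem_nhds ?_
        simpa using hN'1
      obtain ⟨m, -, hm⟩ := hb.toHasBasis.mem_iff.1 hpre
      refine ⟨m, fun n hn => ?_⟩
      have h1 : f '' V (n + 1) ⊆ N' := by
        rintro _ ⟨v, hv, rfl⟩
        exact hm (hb.antitone (by omega : m ≤ n + 1) (hVb (n + 1) hv))
      have h2 : closure (f '' V (n + 1)) ⊆ N' + N' :=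
        (closure_mono h1).trans (aux_closure_subset_add hN'1)
      obtain ⟨a, ha, w, hw, hsum'⟩ := h2 (hinv n)
      rw [← hsum']
      exact hN'2 a ha w hw
    have hyf : Tendsto (fun n => f (s n)) atTop (𝓝 y) := by
      have heq : (fun n => f (s n)) = fun n => y - z n := by
        funext n; rw [hzseq n]; abel
      rw [heq]
      simpa using tendsto_const_nhds.sub hz0'
    have hyx : y = f xlim := tendsto_nhds_unique hyf hfz
    exact ⟨xlim, hxlimU, hyx.symm⟩
  exact Filter.mem_of_superset (hA _ (hVmem 1)) main

end OpenMappingAux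

open scoped Uniformity

/-- **Open image / topological strictness for Fréchet spaces**
(Proposition `prop:finitecoker`).
Let `K` be a complete nontrivially valued nonarchimedean field, `E`, `F` Fréchet
spaces over `K` (Hausdorff, complete topological `K`-vector spaces whose topology is
induced by a countable family of nonarchimedean seminorms), and `f : E → F` a
continuous `K`-linear map whose cokernel `F ⧸ Im f` is finite-dimensional.  Then the
image of `f` is closed in `F` and `f` is topologically strict, i.e. the induced
bijection `E ⧸ Ker f → Im f` is a homeomorphism. -/
theorem frechet_finite_coker_closed_image_and_strict
    {K : Type*} [NontriviallyNormedField K] [IsUltrametricDist K] [CompleteSpace K]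
    {E : Type*} [AddCommGroup E] [Module K E] [UniformSpace E] [IsUniformAddGroup E]
    [CompleteSpace E] [T2Space E]
    {F : Type*} [AddCommGroup F] [Module K F] [UniformSpace F] [IsUniformAddGroup F]
    [CompleteSpace F] [T2Space F]
    -- `E` and `F` are Fréchet: their topologies are induced by a countable family of
    -- nonarchimedean seminorms:
    (hE : ∃ q : SeminormFamily K E ℕ,
      (∀ n, ∀ x y, q n (x + y) ≤ max (q n x) (q n y)) ∧ WithSeminorms q)
    (hF : ∃ q : SeminormFamily K F ℕ,
      (∀ n, ∀ x y, q n (x + y) ≤ max (q n x) (q n y)) ∧ WithSeminorms q)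
    (f : E →L[K] F)
    (hcoker : FiniteDimensional K (F ⧸ LinearMap.range (f : E →ₗ[K] F))) :
    IsClosed (LinearMap.range (f : E →ₗ[K] F) : Set F) ∧
      Continuous ⇑(LinearMap.quotKerEquivRange (f : E →ₗ[K] F)) ∧
      Continuous ⇑(LinearMap.quotKerEquivRange (f : E →ₗ[K] F)).symm := by
  obtain ⟨qE, -, hqE⟩ := hE
  obtain ⟨qF, -, hqF⟩ := hF
  haveI : ContinuousSMul K E := hqE.continuousSMul
  haveI : ContinuousSMul K F := hqF.continuousSMul
  haveI : FirstCountableTopology E := hqE.firstCountableTopology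
  haveI : FirstCountableTopology F := hqF.firstCountableTopology
  haveI : (𝓤 F).IsCountablyGenerated := IsUniformAddGroup.uniformity_countably_generated
  set fl : E →ₗ[K] F := (f : E →ₗ[K] F) with hfl
  -- a linear complement of the range
  obtain ⟨W, hW⟩ := Submodule.exists_isCompl (LinearMap.range fl)
  haveI : FiniteDimensional K ↥W :=
    (Submodule.quotientEquivOfIsCompl _ W hW).finiteDimensional
  haveI : IsUniformAddGroup ↥W := W.toAddSubgroup.isUniformAddGroup
  haveI : CompleteSpace ↥W := (Submodule.complete_of_finiteDimensional W).completeSpace_coe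
  haveI : FirstCountableTopology ↥W := Topology.IsEmbedding.subtypeVal.firstCountableTopology
  -- the auxiliary surjection `g : E × W → F`
  set g : E × ↥W →L[K] F := f.coprod W.subtypeL with hg
  have hgsurj : Function.Surjective ⇑g := by
    intro y
    have hy : y ∈ LinearMap.range fl ⊔ W := by
      rw [codisjoint_iff.1 hW.codisjoint]; trivial
    obtain ⟨a, ha, b, hb, hab⟩ := Submodule.mem_sup.1 hy
    obtain ⟨e, rfl⟩ := ha
    exact ⟨(e, ⟨b, hb⟩), by simpa [hg, hfl, ContinuousLinearMap.coprod_apply] using hab⟩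
  have hgopen : IsOpenMap ⇑g :=
    aux_openMapping (K := K) (g : E × ↥W →ₗ[K] F) g.continuous hgsurj
  -- closedness of the range
  have himg : ⇑g '' (Set.univ ×ˢ {w : ↥W | w ≠ 0}) = (LinearMap.range fl : Set F)ᶜ := by
    ext y
    constructor
    · rintro ⟨⟨e, w⟩, ⟨-, hw⟩, rfl⟩ hy
      have h1 : (w : F) ∈ LinearMap.range fl := by
        have : (w : F) = g (e, w) - f e := by
          simp [hg, ContinuousLinearMap.coprod_apply]
        rw [this]
        exact Submodule.sub_mem _ hy ⟨e, rfl⟩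
      have h3 : (w : F) ∈ (LinearMap.range fl ⊓ W : Submodule K F) := ⟨h1, w.2⟩
      rw [disjoint_iff.1 hW.disjoint] at h3
      exact hw (by ext; simpa using h3)
    · intro hy
      have hy' : y ∈ LinearMap.range fl ⊔ W := by
        rw [codisjoint_iff.1 hW.codisjoint]; trivial
      obtain ⟨a, ha, b, hb, hab⟩ := Submodule.mem_sup.1 hy'
      obtain ⟨e, rfl⟩ := ha
      have hb0 : b ≠ 0 := by
        rintro rfl
        exact hy (by rw [← hab, add_zero]; exact ⟨e, rfl⟩)
      refine ⟨(e, ⟨b, hb⟩), ⟨trivial, fun h0 => hb0 (by simpa using congrArg Subtype.val h0)⟩, ?_⟩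
      simpa [hg, hfl, ContinuousLinearMap.coprod_apply] using hab
  have hclosed : IsClosed (LinearMap.range fl : Set F) := by
    rw [← isOpen_compl_iff, ← himg]
    exact hgopen _ (isOpen_univ.prod (isOpen_ne))
  -- the corestriction of `f` to its range is open
  haveI : CompleteSpace ↥(LinearMap.range fl) := hclosed.completeSpace_coe
  haveI : IsUniformAddGroup ↥(LinearMap.range fl) :=
    (LinearMap.range fl).toAddSubgroup.isUniformAddGroup
  haveI : (𝓤 ↥(LinearMap.range fl)).IsCountablyGenerated := by
    rw [uniformity_subtype]
    exact Filter.comap.isCountablyGenerated _ _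
  set f' : E →L[K] ↥(LinearMap.range fl) :=
    f.codRestrict (LinearMap.range fl) (fun x => LinearMap.mem_range_self fl x) with hf'
  have hf'surj : Function.Surjective ⇑f' := by
    rintro ⟨y, e, rfl⟩
    exact ⟨e, rfl⟩
  have hf'open : IsOpenMap ⇑f' :=
    aux_openMapping (K := K) (f' : E →ₗ[K] ↥(LinearMap.range fl)) f'.continuous hf'surj
  -- the induced bijection
  set e : (E ⧸ LinearMap.ker fl) ≃ₗ[K] ↥(LinearMap.range fl) := LinearMap.quotKerEquivRange fl
    with he
  have hcomp : ⇑e ∘ ⇑(LinearMap.ker fl).mkQ = ⇑f' :=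
    funext fun x => Subtype.ext (LinearMap.quotKerEquivRange_apply_mk fl x)
  have hmk : Topology.IsQuotientMap ⇑(LinearMap.ker fl).mkQ :=
    (Submodule.isOpenQuotientMap_mkQ _).isQuotientMap
  have hcont_e : Continuous ⇑e := by
    rw [hmk.continuous_iff, hcomp]
    exact f'.continuous
  have heopen : IsOpenMap ⇑e := by
    intro U hU
    have himg2 : ⇑e '' U = ⇑f' '' (⇑(LinearMap.ker fl).mkQ ⁻¹' U) := by
      ext y
      constructor
      · rintro ⟨u, hu, rfl⟩
        obtain ⟨x, rfl⟩ := (LinearMap.ker fl).mkQ_surjective u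
        exact ⟨x, hu, (congrFun hcomp x).symm⟩
      · rintro ⟨x, hx, rfl⟩
        exact ⟨(LinearMap.ker fl).mkQ x, hx, congrFun hcomp x⟩
    rw [himg2]
    exact hf'open _ (hU.preimage (Submodule.isOpenQuotientMap_mkQ _).continuous)
  have hesymm : Continuous ⇑e.symm := by
    rw [continuous_def]
    intro U hU
    have : ⇑e.symm ⁻¹' U = ⇑e '' U := (e.toEquiv.image_eq_preimage_symm U).symm
    rw [this]
    exact heopen U hU
  exact ⟨hclosed, hcont_e, hesymm⟩
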